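/- The cofree comonoid construction p ↦ c⁀p extends to a functor Poly → Comon(Poly,◁) that is right adjoint to the forgetful functor U: Comon(Poly,◁) → Poly; the counit c⁀p → p is the composite of the projection c⁀p → p⁽¹⁾ = y × p with the second product projection, and the unit c → c⁀c of a comonoid (c, ε, δ) is built from the iterated comultiplication maps c → c⁽ⁱ⁾. -/

import Mathlib

/-- A polynomial functor, given by a set of positions and, for each position, a set of
directions. -/
structure PolyF where
  pos : Type
  dir : pos → Type

/-- A morphism of polynomial functors (natural transformation), in positions/directions form. -/
structure PolyFHom (p q : PolyF) where
  onPos : p.pos → q.pos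
  onDir : ∀ a, q.dir (onPos a) → p.dir a

def PolyFHom.id (p : PolyF) : PolyFHom p p := ⟨fun a => a, fun _ d => d⟩

/-- Diagrammatic composition of morphisms of polynomials. -/
def PolyFHom.comp {p q r : PolyF} (f : PolyFHom p q) (g : PolyFHom q r) : PolyFHom p r :=
  ⟨fun a => g.onPos (f.onPos a), fun a d => f.onDir a (g.onDir (f.onPos a) d)⟩

/-- The identity polynomial `y`. -/
def yPoly : PolyF := ⟨PUnit, fun _ => PUnit⟩

/-- The linear polynomial `S·y`. -/
def lin (S : Type) : PolyF := ⟨S, fun _ => PUnit⟩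

/-- The representable polynomial `y^T`. -/
def rep (T : Type) : PolyF := ⟨PUnit, fun _ => T⟩

/-- The composition product `p ◁ q` of polynomials. -/
def polyComp (p q : PolyF) : PolyF :=
  ⟨Σ a : p.pos, p.dir a → q.pos, fun x => Σ i : p.dir x.1, q.dir (x.2 i)⟩

/-- The Dirichlet tensor product `p ⊗ q`. -/
def tens (p q : PolyF) : PolyF :=
  ⟨p.pos × q.pos, fun x => p.dir x.1 × q.dir x.2⟩

/-- Horizontal composition `f ◁ g` of polynomial morphisms. -/
def hcomp {p p' q q' : PolyF} (f : PolyFHom p p') (g : PolyFHom q q') :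
    PolyFHom (polyComp p q) (polyComp p' q') :=
  ⟨fun x => ⟨f.onPos x.1, fun i => g.onPos (x.2 (f.onDir x.1 i))⟩,
   fun x d => ⟨f.onDir x.1 d.1, g.onDir _ d.2⟩⟩

/-- The associator `(p ◁ q) ◁ r → p ◁ (q ◁ r)`. -/
def assocHom (p q r : PolyF) : PolyFHom (polyComp (polyComp p q) r) (polyComp p (polyComp q r)) :=
  ⟨fun x => ⟨x.1.1, fun i => ⟨x.1.2 i, fun j => x.2 ⟨i, j⟩⟩⟩,
   fun x d => ⟨⟨d.1, d.2.1⟩, d.2.2⟩⟩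

/-- The inverse associator `p ◁ (q ◁ r) → (p ◁ q) ◁ r`. -/
def assocInv (p q r : PolyF) : PolyFHom (polyComp p (polyComp q r)) (polyComp (polyComp p q) r) :=
  ⟨fun x => ⟨⟨x.1, fun i => (x.2 i).1⟩, fun ij => (x.2 ij.1).2 ij.2⟩,
   fun x d => ⟨d.1.1, d.1.2, d.2⟩⟩

/-- Left unitor `y ◁ p → p`. -/
def lunitor (p : PolyF) : PolyFHom (polyComp yPoly p) p :=
  ⟨fun x => x.2 PUnit.unit, fun _ d => ⟨PUnit.unit, d⟩⟩

/-- Right unitor `p ◁ y → p`. -/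
def runitor (p : PolyF) : PolyFHom (polyComp p yPoly) p :=
  ⟨fun x => x.1, fun _ d => ⟨d, PUnit.unit⟩⟩

/-- Inverse left unitor `p → y ◁ p`. -/
def lunitorInv (p : PolyF) : PolyFHom p (polyComp yPoly p) :=
  ⟨fun a => ⟨PUnit.unit, fun _ => a⟩, fun _ d => d.2⟩

/-- Inverse right unitor `p → p ◁ y`. -/
def runitorInv (p : PolyF) : PolyFHom p (polyComp p yPoly) :=
  ⟨fun a => ⟨a, fun _ => PUnit.unit⟩, fun _ d => d.1⟩

/-- A comonoid structure on a polynomial with respect to `(y, ◁)`. -/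
structure ComonoidStruct (c : PolyF) where
  counit : PolyFHom c yPoly
  comul : PolyFHom c (polyComp c c)
  counit_left : comul.comp ((hcomp counit (PolyFHom.id c)).comp (lunitor c)) = PolyFHom.id c
  counit_right : comul.comp ((hcomp (PolyFHom.id c) counit).comp (runitor c)) = PolyFHom.id c
  coassoc : comul.comp (hcomp (PolyFHom.id c) comul)
    = comul.comp ((hcomp comul (PolyFHom.id c)).comp (assocHom c c c))

/-- `f` is a comonoid homomorphism. -/
def IsComonHom {c d : PolyF} (mc : ComonoidStruct c) (md : ComonoidStruct d)
    (f : PolyFHom c d) : Prop :=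
  f.comp md.counit = mc.counit ∧ f.comp md.comul = mc.comul.comp (hcomp f f)

/-- A `(c,d)`-bicomodule. -/
structure Bicomod (c d : PolyF) (mc : ComonoidStruct c) (md : ComonoidStruct d) where
  carrier : PolyF
  coactL : PolyFHom carrier (polyComp c carrier)
  coactR : PolyFHom carrier (polyComp carrier d)
  counitL : coactL.comp ((hcomp mc.counit (PolyFHom.id carrier)).comp (lunitor carrier))
    = PolyFHom.id carrier
  coassocL : coactL.comp (hcomp (PolyFHom.id c) coactL)
    = coactL.comp ((hcomp mc.comul (PolyFHom.id carrier)).comp (assocHom c c carrier))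
  counitR : coactR.comp ((hcomp (PolyFHom.id carrier) md.counit).comp (runitor carrier))
    = PolyFHom.id carrier
  coassocR : coactR.comp (hcomp (PolyFHom.id carrier) md.comul)
    = coactR.comp ((hcomp coactR (PolyFHom.id d)).comp (assocHom carrier d d))
  compat : coactL.comp (hcomp (PolyFHom.id c) coactR)
    = coactR.comp ((hcomp coactL (PolyFHom.id d)).comp (assocHom c carrier d))

/-- A morphism of `(c,d)`-bicomodules. -/
structure BicomodHom {c d : PolyF} {mc : ComonoidStruct c} {md : ComonoidStruct d}
    (P Q : Bicomod c d mc md) where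
  val : PolyFHom P.carrier Q.carrier
  commL : P.coactL.comp (hcomp (PolyFHom.id c) val) = val.comp Q.coactL
  commR : P.coactR.comp (hcomp val (PolyFHom.id d)) = val.comp Q.coactR

/-- A witness that the bicomodule `B` is the composite `P ◁_d Q`, i.e. the equalizer of the
two canonical maps `P ◁ Q ⇉ P ◁ d ◁ Q`, compatibly with the coactions. -/
structure CompositeWitness {c d e : PolyF} {mc : ComonoidStruct c} {md : ComonoidStruct d}
    {me : ComonoidStruct e} (P : Bicomod c d mc md) (Q : Bicomod d e md me)
    (B : Bicomod c e mc me) where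
  incl : PolyFHom B.carrier (polyComp P.carrier Q.carrier)
  equalizes : incl.comp ((hcomp P.coactR (PolyFHom.id Q.carrier)).comp
      (assocHom P.carrier d Q.carrier))
    = incl.comp (hcomp (PolyFHom.id P.carrier) Q.coactL)
  lift : ∀ (X : PolyF) (h : PolyFHom X (polyComp P.carrier Q.carrier)),
    h.comp ((hcomp P.coactR (PolyFHom.id Q.carrier)).comp (assocHom P.carrier d Q.carrier))
      = h.comp (hcomp (PolyFHom.id P.carrier) Q.coactL) →
    ∃! l : PolyFHom X B.carrier, l.comp incl = h
  compatL : B.coactL.comp (hcomp (PolyFHom.id c) incl)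
    = incl.comp ((hcomp P.coactL (PolyFHom.id Q.carrier)).comp (assocHom c P.carrier Q.carrier))
  compatR : B.coactR.comp (hcomp incl (PolyFHom.id e))
    = incl.comp ((hcomp (PolyFHom.id P.carrier) Q.coactR).comp (assocInv P.carrier Q.carrier e))

/-- The identity bicomodule on a comonoid. -/
def idBicomod {c : PolyF} (mc : ComonoidStruct c) : Bicomod c c mc mc where
  carrier := c
  coactL := mc.comul
  coactR := mc.comul
  counitL := mc.counit_left
  coassocL := mc.coassoc
  counitR := mc.counit_right
  coassocR := mc.coassoc
  compat := mc.coassoc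

/-- A monad on `c` in the bicategory of polynomial comonoids and bicomodules. -/
structure MonadOn {c : PolyF} {mc : ComonoidStruct c} (m : Bicomod c c mc mc) where
  sq : Bicomod c c mc mc
  w : CompositeWitness m m sq
  unit : BicomodHom (idBicomod mc) m
  mul : BicomodHom sq m
  left_unit : ∀ L : PolyFHom m.carrier sq.carrier,
    L.comp w.incl = m.coactL.comp (hcomp unit.val (PolyFHom.id m.carrier)) →
    L.comp mul.val = PolyFHom.id m.carrier
  right_unit : ∀ L : PolyFHom m.carrier sq.carrier,
    L.comp w.incl = m.coactR.comp (hcomp (PolyFHom.id m.carrier) unit.val) →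
    L.comp mul.val = PolyFHom.id m.carrier
  cube : Bicomod c c mc mc
  wc : CompositeWitness sq m cube
  cube' : Bicomod c c mc mc
  wc' : CompositeWitness m sq cube'
  mul_assoc : ∀ (A : PolyFHom cube.carrier cube'.carrier)
      (L1 : PolyFHom cube.carrier sq.carrier) (L2 : PolyFHom cube'.carrier sq.carrier),
    A.comp (wc'.incl.comp (hcomp (PolyFHom.id m.carrier) w.incl))
      = wc.incl.comp ((hcomp w.incl (PolyFHom.id m.carrier)).comp
          (assocHom m.carrier m.carrier m.carrier)) →
    L1.comp w.incl = wc.incl.comp (hcomp mul.val (PolyFHom.id m.carrier)) →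
    L2.comp w.incl = wc'.incl.comp (hcomp (PolyFHom.id m.carrier) mul.val) →
    L1.comp mul.val = A.comp (L2.comp mul.val)

/-- A comonad on `d` in the bicategory of polynomial comonoids and bicomodules. -/
structure ComonadOn {d : PolyF} {md : ComonoidStruct d} (E : Bicomod d d md md) where
  sq : Bicomod d d md md
  w : CompositeWitness E E sq
  counit : BicomodHom E (idBicomod md)
  comul : BicomodHom E sq
  left_counit : comul.val.comp (w.incl.comp (hcomp counit.val (PolyFHom.id E.carrier)))
    = E.coactL
  right_counit : comul.val.comp (w.incl.comp (hcomp (PolyFHom.id E.carrier) counit.val))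
    = E.coactR
  coassoc : comul.val.comp (w.incl.comp ((hcomp comul.val (PolyFHom.id E.carrier)).comp
      ((hcomp w.incl (PolyFHom.id E.carrier)).comp
        (assocHom E.carrier E.carrier E.carrier))))
    = comul.val.comp (w.incl.comp ((hcomp (PolyFHom.id E.carrier) comul.val).comp
        (hcomp (PolyFHom.id E.carrier) w.incl)))

/-- A left module over a monad `m` in the bicategory of comonoids and bicomodules. -/
structure ModuleOn {c b : PolyF} {mc : ComonoidStruct c} {mb : ComonoidStruct b}
    (m : Bicomod c c mc mc) (M : MonadOn m) (A : Bicomod c b mc mb) where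
  mA : Bicomod c b mc mb
  w : CompositeWitness m A mA
  act : BicomodHom mA A
  unit_law : ∀ L : PolyFHom A.carrier mA.carrier,
    L.comp w.incl = A.coactL.comp (hcomp M.unit.val (PolyFHom.id A.carrier)) →
    L.comp act.val = PolyFHom.id A.carrier
  sqA : Bicomod c b mc mb
  wsq : CompositeWitness M.sq A sqA
  assoc_law : ∀ (L0 : PolyFHom sqA.carrier (polyComp m.carrier mA.carrier))
      (L1 L2 : PolyFHom sqA.carrier mA.carrier),
    L0.comp (hcomp (PolyFHom.id m.carrier) w.incl)
      = wsq.incl.comp ((hcomp M.w.incl (PolyFHom.id A.carrier)).comp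
          (assocHom m.carrier m.carrier A.carrier)) →
    L1.comp w.incl = wsq.incl.comp (hcomp M.mul.val (PolyFHom.id A.carrier)) →
    L2.comp w.incl = L0.comp (hcomp (PolyFHom.id m.carrier) act.val) →
    L1.comp act.val = L2.comp act.val

/-- A witness that `E` is the right coclosure `⟨p, q⟩`, i.e. that `− ◁_d q` applied to `E`
is couniversal among `(d,d)`-bicomodules receiving a map from `p`. -/
structure CoclosureWitness {d c : PolyF} {md : ComonoidStruct d} {mc : ComonoidStruct c}
    (p q : Bicomod d c md mc) (E : Bicomod d d md md) where
  cw : ∀ r : Bicomod d d md md, (B : Bicomod d c md mc) × CompositeWitness r q B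
  equiv : ∀ r : Bicomod d d md md, BicomodHom E r ≃ BicomodHom p (cw r).1
  natural : ∀ (r r' : Bicomod d d md md) (g : BicomodHom r r')
      (h : PolyFHom (cw r).1.carrier (cw r').1.carrier),
    h.comp (cw r').2.incl = (cw r).2.incl.comp (hcomp g.val (PolyFHom.id q.carrier)) →
    ∀ (f : BicomodHom E r) (fg : BicomodHom E r'), fg.val = f.val.comp g.val →
    ((equiv r') fg).val = ((equiv r) f).val.comp h

-- tests

/-- Evaluation of a polynomial functor at a set. -/
def pEval (p : PolyF) (X : Type) : Type := Σ a : p.pos, p.dir a → X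

/-- The internal hom `[q,p]` for the Dirichlet tensor product. -/
def ihom (q p : PolyF) : PolyF :=
  ⟨PolyFHom q p, fun φ => Σ I : q.pos, p.dir (φ.onPos I)⟩

/-- The canonical duoidal map `S·y ⊗ p → S·y ◁ p`. -/
def duoLin (S : Type) (p : PolyF) : PolyFHom (tens (lin S) p) (polyComp (lin S) p) :=
  ⟨fun x => ⟨x.1, fun _ => x.2⟩, fun _ d => (d.1, d.2)⟩

/-- The canonical duoidal map `p ⊗ y^T → p ◁ y^T`. -/
def duoRep (p : PolyF) (T : Type) : PolyFHom (tens p (rep T)) (polyComp p (rep T)) :=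
  ⟨fun x => ⟨x.1, fun _ => PUnit.unit⟩, fun _ d => (d.1, d.2)⟩

/-- A category structure with objects the positions of `c` and morphisms out of `C` the
directions `c.dir C`. -/
structure CatStruct (c : PolyF) where
  cod : ∀ {C : c.pos}, c.dir C → c.pos
  ident : ∀ C : c.pos, c.dir C
  compose : ∀ {C : c.pos} (f : c.dir C), c.dir (cod f) → c.dir C
  cod_ident : ∀ C : c.pos, cod (ident C) = C
  cod_compose : ∀ {C : c.pos} (f : c.dir C) (g : c.dir (cod f)),
    cod (compose f g) = cod g
  compose_ident_right : ∀ {C : c.pos} (f : c.dir C), compose f (ident (cod f)) = f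
  compose_ident_left : ∀ {C : c.pos} (g : c.dir C),
    compose (ident C) (cast (congrArg c.dir (cod_ident C)).symm g) = g
  compose_assoc : ∀ {C : c.pos} (f : c.dir C) (g : c.dir (cod f))
      (h : c.dir (cod (compose f g))),
    compose (compose f g) h = compose f (compose g (cast (congrArg c.dir (cod_compose f g)) h))

/-- Coproduct of polynomials. -/
def psum (p q : PolyF) : PolyF := ⟨Sum p.pos q.pos, Sum.elim p.dir q.dir⟩

def sumMap {p p' q q' : PolyF} (f : PolyFHom p p') (g : PolyFHom q q') :
    PolyFHom (psum p q) (psum p' q') where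
  onPos := Sum.map f.onPos g.onPos
  onDir := fun x => match x with
    | Sum.inl a => f.onDir a
    | Sum.inr b => g.onDir b

/-- The fold map `y + y → y`. -/
def foldY : PolyFHom (psum yPoly yPoly) yPoly where
  onPos := fun _ => PUnit.unit
  onDir := fun x => match x with
    | Sum.inl _ => fun u => u
    | Sum.inr _ => fun u => u

/-- The duoidal interchange `(p ◁ q) + (r ◁ s) → (p + r) ◁ (q + s)`. -/
def duoSum (p q r s : PolyF) :
    PolyFHom (psum (polyComp p q) (polyComp r s)) (polyComp (psum p r) (psum q s)) where
  onPos := fun x => match x with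
    | Sum.inl y => ⟨Sum.inl y.1, fun i => Sum.inl (y.2 i)⟩
    | Sum.inr y => ⟨Sum.inr y.1, fun i => Sum.inr (y.2 i)⟩
  onDir := fun x => match x with
    | Sum.inl _ => fun d => ⟨d.1, d.2⟩
    | Sum.inr _ => fun d => ⟨d.1, d.2⟩

def tensMap {p p' q q' : PolyF} (f : PolyFHom p p') (g : PolyFHom q q') :
    PolyFHom (tens p q) (tens p' q') :=
  ⟨fun x => (f.onPos x.1, g.onPos x.2), fun x d => (f.onDir x.1 d.1, g.onDir x.2 d.2)⟩

/-- The isomorphism `y ⊗ y → y`. -/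
def tensUnitY : PolyFHom (tens yPoly yPoly) yPoly :=
  ⟨fun _ => PUnit.unit, fun _ _ => (PUnit.unit, PUnit.unit)⟩

/-- The duoidal interchange `(p ◁ q) ⊗ (r ◁ s) → (p ⊗ r) ◁ (q ⊗ s)`. -/
def duoTens (p q r s : PolyF) :
    PolyFHom (tens (polyComp p q) (polyComp r s)) (polyComp (tens p r) (tens q s)) :=
  ⟨fun x => ⟨(x.1.1, x.2.1), fun ij => (x.1.2 ij.1, x.2.2 ij.2)⟩,
   fun _ d => (⟨d.1.1, d.2.1⟩, ⟨d.1.2, d.2.2⟩)⟩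

/-- Binary product of polynomials. -/
def pprod (p q : PolyF) : PolyF := ⟨p.pos × q.pos, fun x => Sum (p.dir x.1) (q.dir x.2)⟩

def prodMap {p p' q q' : PolyF} (f : PolyFHom p p') (g : PolyFHom q q') :
    PolyFHom (pprod p q) (pprod p' q') :=
  ⟨fun x => (f.onPos x.1, g.onPos x.2),
   fun x d => Sum.elim (fun a => Sum.inl (f.onDir x.1 a)) (fun b => Sum.inr (g.onDir x.2 b)) d⟩

/-- The tower `p⁽⁰⁾ = y`, `p⁽ⁿ⁺¹⁾ = y × (p ◁ p⁽ⁿ⁾)`. -/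
def iter (p : PolyF) : ℕ → PolyF
  | 0 => yPoly
  | n+1 => pprod yPoly (polyComp p (iter p n))

/-- The projections `p⁽ⁿ⁺¹⁾ → p⁽ⁿ⁾`. -/
def projIter (p : PolyF) : ∀ n : ℕ, PolyFHom (iter p (n+1)) (iter p n)
  | 0 => ⟨fun _ => PUnit.unit, fun _ _ => Sum.inl PUnit.unit⟩
  | n+1 => prodMap (PolyFHom.id yPoly) (hcomp (PolyFHom.id p) (projIter p n))

/-- The carrier of the cofree comonoid on `p`: the limit of the tower `p⁽ⁿ⁾`,
with directions the colimit of the direction sets along the tower. -/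
def cofreeP (p : PolyF) : PolyF where
  pos := {f : ∀ n : ℕ, (iter p n).pos // ∀ n : ℕ, (projIter p n).onPos (f (n+1)) = f n}
  dir := fun f => Quot (fun x y : Σ n : ℕ, (iter p n).dir (f.1 n) =>
    y = ⟨x.1 + 1, (projIter p x.1).onDir (f.1 (x.1+1))
      (cast (congrArg (iter p x.1).dir (f.2 x.1).symm) x.2)⟩)

/-- The projection `c⁀p → y` onto `p⁽⁰⁾`. -/
def projZero (p : PolyF) : PolyFHom (cofreeP p) yPoly :=
  ⟨fun _ => PUnit.unit, fun f _ => Quot.mk _ ⟨0, PUnit.unit⟩⟩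

/-- The projection `c⁀p → p`, via `p⁽¹⁾ = y × (p ◁ y) → p`. -/
def projP (p : PolyF) : PolyFHom (cofreeP p) p :=
  ⟨fun f => ((f.1 1).2).1, fun f d => Quot.mk _ ⟨1, Sum.inr ⟨d, PUnit.unit⟩⟩⟩

/-- The effects-handler axioms for `φ : s ◁ d → c ◁ s`. -/
def IsHandler {c d : PolyF} (mc : ComonoidStruct c) (md : ComonoidStruct d) (s : PolyF)
    (φ : PolyFHom (polyComp s d) (polyComp c s)) : Prop :=
  φ.comp ((hcomp mc.counit (PolyFHom.id s)).comp (lunitor s))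
    = (hcomp (PolyFHom.id s) md.counit).comp (runitor s)
  ∧ (hcomp (PolyFHom.id s) md.comul).comp ((assocInv s d d).comp
      ((hcomp φ (PolyFHom.id d)).comp ((assocHom c s d).comp (hcomp (PolyFHom.id c) φ))))
    = φ.comp ((hcomp mc.comul (PolyFHom.id s)).comp (assocHom c c s))

/-- The left coaction `s ◁ d → c ◁ (s ◁ d)` induced by an effects handler `φ`. -/
def handlerCoactL {c d : PolyF} (md : ComonoidStruct d) (s : PolyF)
    (φ : PolyFHom (polyComp s d) (polyComp c s)) :
    PolyFHom (polyComp s d) (polyComp c (polyComp s d)) :=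
  (hcomp (PolyFHom.id s) md.comul).comp ((assocInv s d d).comp
    ((hcomp φ (PolyFHom.id d)).comp (assocHom c s d)))

/-- The right coaction `s ◁ d → (s ◁ d) ◁ d` induced by comultiplication. -/
def handlerCoactR {d : PolyF} (md : ComonoidStruct d) (s : PolyF) :
    PolyFHom (polyComp s d) (polyComp (polyComp s d) d) :=
  (hcomp (PolyFHom.id s) md.comul).comp (assocInv s d d)

/-- A witness that `B` is the equalizer of the two canonical maps `p ◁ q ⇉ p ◁ dm ◁ q`
determined by a right coaction on `p` and a left coaction on `q`. -/
structure EqualizerWitness {p dm q : PolyF} (ρ : PolyFHom p (polyComp p dm))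
    (lam : PolyFHom q (polyComp dm q)) (B : PolyF) where
  incl : PolyFHom B (polyComp p q)
  equalizes : incl.comp ((hcomp ρ (PolyFHom.id q)).comp (assocHom p dm q))
    = incl.comp (hcomp (PolyFHom.id p) lam)
  lift : ∀ (X : PolyF) (h : PolyFHom X (polyComp p q)),
    h.comp ((hcomp ρ (PolyFHom.id q)).comp (assocHom p dm q))
      = h.comp (hcomp (PolyFHom.id p) lam) →
    ∃! l : PolyFHom X B, l.comp incl = h

/-- The discrete comonoid (discrete category) on a set `A`. -/
def discreteComon (A : Type) : ComonoidStruct (lin A) where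
  counit := ⟨fun _ => PUnit.unit, fun _ _ => PUnit.unit⟩
  comul := ⟨fun a => ⟨a, fun _ => a⟩, fun _ _ => PUnit.unit⟩
  counit_left := rfl
  counit_right := rfl
  coassoc := rfl

/-- The bicomodule between discrete comonoids given by a span
`A ← (total space of P) → P.pos → A`. -/
def spanBicomod (A : Type) (P : PolyF) (f : P.pos → A) (g : ∀ x, P.dir x → A) :
    Bicomod (lin A) (lin A) (discreteComon A) (discreteComon A) where
  carrier := P
  coactL := ⟨fun x => ⟨f x, fun _ => x⟩, fun _ d => d.2⟩
  coactR := ⟨fun x => ⟨x, fun i => g x i⟩, fun _ d => d.1⟩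
  counitL := rfl
  coassocL := rfl
  counitR := rfl
  coassocR := rfl
  compat := rfl


/-! ### Auxiliary infrastructure for the cofree comonoid -/

section CofreeInfra

variable {p : PolyF}

theorem PolyFHom.hext {q r : PolyF} {f g : PolyFHom q r}
    (h1 : ∀ a, f.onPos a = g.onPos a)
    (h2 : ∀ a d d', HEq d d' → f.onDir a d = g.onDir a d') : f = g := by
  obtain ⟨fP, fD⟩ := f; obtain ⟨gP, gD⟩ := g
  have h : fP = gP := funext h1
  subst h
  simp only [PolyFHom.mk.injEq, heq_eq_eq, true_and]
  funext a d
  exact h2 a d d HEq.rfl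

theorem hom_pos {q r : PolyF} {f g : PolyFHom q r} (h : f = g) (a : q.pos) :
    f.onPos a = g.onPos a := by rw [h]

theorem hom_dir {q r : PolyF} {f g : PolyFHom q r} (h : f = g) (a : q.pos)
    {d : r.dir (f.onPos a)} {d' : r.dir (g.onPos a)} (hd : HEq d d') :
    f.onDir a d = g.onDir a d' := by subst h; cases hd; rfl

theorem sigma_mk_eq {A : Type} {B : A → Type} {a a' : A} (h : a = a')
    {b : B a} {b' : B a'} (hb : HEq b b') : (⟨a, b⟩ : Σ x, B x) = ⟨a', b'⟩ := by
  subst h; cases hb; rfl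

theorem hcongr2 {A : Type} {B : A → Type} {C : A → Type} (f : ∀ a, B a → C a)
    {a a' : A} (h : a = a') {b : B a} {b' : B a'} (hb : HEq b b') :
    HEq (f a b) (f a' b') := by subst h; cases hb; rfl

theorem heq_app {α α' : Type} {β β' : Type} (hα : α = α') (hβ : β = β')
    {f : α → β} {g : α' → β'} (hf : HEq f g) {x : α} {x' : α'} (hx : HEq x x') :
    HEq (f x) (g x') := by subst hα; subst hβ; cases hf; cases hx; rfl

theorem sig_app {X : Type} {A A' : p.pos} {T : p.dir A → X} {T' : p.dir A' → X}
    (h : (⟨A, T⟩ : Σ a : p.pos, p.dir a → X) = ⟨A', T'⟩)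
    (i : p.dir A) (i' : p.dir A') (hi : HEq i i') : T i = T' i' := by
  have h1 : A = A' := congrArg Sigma.fst h
  subst h1
  have h2 : T = T' := by injection h
  subst h2; cases hi; rfl

/-- Cast of an `inl` direction of `iter p (n+1)`. -/
theorem cast_inl {n : ℕ} {x y : (iter p (n+1)).pos} (h : x = y)
    (h' : (iter p (n+1)).dir x = (iter p (n+1)).dir y) (u : PUnit) :
    cast h' (Sum.inl u : (iter p (n+1)).dir x) = Sum.inl u := by
  subst h; rfl

/-- Cast of an `inr` direction of `iter p (n+1)`. -/
theorem cast_inr {n : ℕ} {x y : (iter p (n+1)).pos} (h : x = y)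
    (h' : (iter p (n+1)).dir x = (iter p (n+1)).dir y)
    (i : p.dir x.2.1) (d : (iter p n).dir (x.2.2 i))
    (pf : (iter p n).dir (x.2.2 i) =
      (iter p n).dir (y.2.2 (cast (congrArg (fun z => p.dir z.2.1) h) i))) :
    cast h' (Sum.inr ⟨i, d⟩ : (iter p (n+1)).dir x) =
      Sum.inr ⟨cast (congrArg (fun z => p.dir z.2.1) h) i, cast pf d⟩ := by
  subst h; rfl

/-- The projection `c⁀p → p⁽ⁿ⁾`. -/
def lvl (p : PolyF) (n : ℕ) : PolyFHom (cofreeP p) (iter p n) :=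
  ⟨fun F => F.1 n, fun F d => Quot.mk _ ⟨n, d⟩⟩

/-- A level-`n` representative of a direction equals its level-`n+1` lift. -/
theorem mk_lift (F : (cofreeP p).pos) (n : ℕ) (d : (iter p n).dir (F.1 n)) :
    ((lvl p n).onDir F d : (cofreeP p).dir F) = (lvl p (n+1)).onDir F
      ((projIter p n).onDir (F.1 (n+1)) (cast (congrArg (iter p n).dir (F.2 n).symm) d)) :=
  Quot.sound rfl

theorem lvl_succ (n : ℕ) : (lvl p (n+1)).comp (projIter p n) = lvl p n := by
  apply PolyFHom.hext
  · intro F; exact F.2 n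
  · intro F d d' hd
    have hc : cast (congrArg (iter p n).dir (F.2 n).symm) d' = d :=
      cast_eq_iff_heq.mpr hd.symm
    rw [← hc]
    exact (mk_lift F n d').symm


/-- All levels of a cofree position have the same root `p`-position. -/
theorem aEq (F : (cofreeP p).pos) : ∀ n : ℕ, ((F.1 (n+1)).2.1 : p.pos) = (F.1 1).2.1
  | 0 => rfl
  | n+1 => (congrArg (fun z : (iter p (n+1)).pos => z.2.1) (F.2 (n+1))).trans (aEq F n)

theorem aEq2 (F : (cofreeP p).pos) (n m : ℕ) : ((F.1 (n+1)).2.1 : p.pos) = (F.1 (m+1)).2.1 :=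
  (aEq F n).trans (aEq F m).symm

/-- The subtree of a cofree position along a root direction (presented at level `n0`). -/
def branchAt (F : (cofreeP p).pos) (n0 : ℕ) (i : p.dir ((F.1 (n0+1)).2.1)) : (cofreeP p).pos :=
  ⟨fun n => (F.1 (n+1)).2.2 (cast (congrArg p.dir (aEq2 F n0 n)) i), fun n => by
    have h := congrArg (fun z : (iter p (n+1)).pos => z.2) (F.2 (n+1))
    exact sig_app h _ _ ((cast_heq _ _).trans (cast_heq _ _).symm)⟩

theorem branchAt_eq (F : (cofreeP p).pos) (n0 n1 : ℕ) (i : p.dir ((F.1 (n0+1)).2.1)) :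
    branchAt F n1 (cast (congrArg p.dir (aEq2 F n0 n1)) i) = branchAt F n0 i := by
  apply Subtype.ext; funext k
  exact congrArg ((F.1 (k+1)).2.2)
    (eq_of_heq ((cast_heq _ _).trans ((cast_heq _ _).trans (cast_heq _ _).symm)))

/-- The lift of a level-`n` direction to level `n+1`. -/
def liftD (F : (cofreeP p).pos) (n : ℕ) (d : (iter p n).dir (F.1 n)) :
    (iter p (n+1)).dir (F.1 (n+1)) :=
  (projIter p n).onDir (F.1 (n+1)) (cast (congrArg (iter p n).dir (F.2 n).symm) d)

theorem mk_lift' (F : (cofreeP p).pos) (n : ℕ) (d : (iter p n).dir (F.1 n)) :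
    ((lvl p n).onDir F d : (cofreeP p).dir F) = (lvl p (n+1)).onDir F (liftD F n d) :=
  Quot.sound rfl

/-- Graft a direction of a branch onto the root direction. -/
def consAt (F : (cofreeP p).pos) (n0 : ℕ) (i : p.dir ((F.1 (n0+1)).2.1)) :
    (cofreeP p).dir (branchAt F n0 i) → (cofreeP p).dir F :=
  Quot.lift
    (fun x => (lvl p (x.1+1)).onDir F
      (Sum.inr ⟨cast (congrArg p.dir (aEq2 F n0 x.1)) i, x.2⟩))
    (by
      rintro ⟨m, d⟩ b h
      subst h
      show (lvl p (m+1)).onDir F (Sum.inr ⟨cast (congrArg p.dir (aEq2 F n0 m)) i, d⟩) = _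
      erw [mk_lift']
      apply congrArg
      show liftD F (m+1) _ = _
      unfold liftD
      have hk : cast (congrArg (fun z : (iter p (m+1)).pos => p.dir z.2.1) (F.2 (m+1)).symm)
          (cast (congrArg p.dir (aEq2 F n0 m)) i)
          = cast (congrArg p.dir (aEq2 F n0 (m+1))) i := by
        rw [cast_cast]; rfl
      erw [cast_inr (F.2 (m+1)).symm _ _ d
        ((congrArg (iter p m).dir ((branchAt F n0 i).2 m).symm).trans
          (congrArg (fun k' => (iter p m).dir
            (((projIter p (m+1)).onPos (F.1 (m+2))).2.2 k')) hk.symm))]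
      show Sum.inr _ = Sum.inr _
      apply congrArg Sum.inr
      exact sigma_mk_eq hk (hcongr2
        (fun k' (w : (iter p m).dir ((projIter p m).onPos ((F.1 (m+2)).2.2 k'))) =>
          (projIter p m).onDir ((F.1 (m+2)).2.2 k') w) hk
        ((cast_heq _ _).trans (cast_heq _ _).symm)))

/-- The subtree of `F` at (the endpoint of) a level-`n` direction. -/
def subn : ∀ (n : ℕ) (F : (cofreeP p).pos), (iter p n).dir (F.1 n) → (cofreeP p).pos
  | 0, F, _ => F
  | _+1, F, Sum.inl _ => F
  | n+1, F, Sum.inr ⟨i, j⟩ => subn n (branchAt F n i) j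

/-- Grafting a full direction of the subtree onto a level-`n` direction. -/
def graftn : ∀ (n : ℕ) (F : (cofreeP p).pos) (d : (iter p n).dir (F.1 n)),
    (cofreeP p).dir (subn n F d) → (cofreeP p).dir F
  | 0, _, _ => fun e => e
  | _+1, _, Sum.inl _ => fun e => e
  | n+1, F, Sum.inr ⟨i, j⟩ => fun e => consAt F n i (graftn n (branchAt F n i) j e)

theorem subn_congr (n : ℕ) {B B' : (cofreeP p).pos} (h : B = B')
    {d : (iter p n).dir (B.1 n)} {d' : (iter p n).dir (B'.1 n)} (hd : HEq d d') :
    subn n B d = subn n B' d' := by subst h; cases hd; rfl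

theorem graftn_congr (n : ℕ) {B B' : (cofreeP p).pos} (h : B = B')
    {d : (iter p n).dir (B.1 n)} {d' : (iter p n).dir (B'.1 n)} (hd : HEq d d') :
    HEq (graftn n B d) (graftn n B' d') := by subst h; cases hd; rfl




theorem ndrec_heq {α : Sort u} {a b : α} {motive : α → Sort v} (h : a = b) (t : motive a) :
    HEq (@Eq.ndrec α a motive t b h) t := by subst h; rfl

theorem liftD_inl (F : (cofreeP p).pos) (n : ℕ) (u : PUnit) :
    liftD F (n+1) (Sum.inl u) = Sum.inl u := by
  unfold liftD
  rw [cast_inl (F.2 (n+1)).symm]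
  rfl

theorem liftD_inr (F : (cofreeP p).pos) (n : ℕ) (i : p.dir ((F.1 (n+1)).2.1))
    (j : (iter p n).dir ((F.1 (n+1)).2.2 i)) :
    liftD F (n+1) (Sum.inr ⟨i, j⟩) =
      Sum.inr ⟨cast (congrArg p.dir (aEq2 F n (n+1))) i, liftD (branchAt F n i) n j⟩ := by
  unfold liftD
  rw [cast_inr (F.2 (n+1)).symm _ i j
    (congrArg (iter p n).dir ((branchAt F n i).2 n).symm)]
  rfl

theorem subInv : ∀ (n : ℕ) (F : (cofreeP p).pos) (d : (iter p n).dir (F.1 n)),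
    subn (n+1) F (liftD F n d) = subn n F d
  | 0, _, _ => rfl
  | n+1, F, Sum.inl u => by erw [liftD_inl]; rfl
  | n+1, F, Sum.inr ⟨i, j⟩ => by
      rw [liftD_inr]
      exact (subn_congr (n+1) (branchAt_eq F n (n+1) i) HEq.rfl).trans
        (subInv n (branchAt F n i) j)

/-- Cast of a quotient direction along an equality of cofree positions. -/
theorem quot_cast {B B' : (cofreeP p).pos} (h : B = B')
    (h' : (cofreeP p).dir B = (cofreeP p).dir B') (m : ℕ) (w : (iter p m).dir (B.1 m)) :
    cast h' ((lvl p m).onDir B w) =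
      (lvl p m).onDir B' (cast (congrArg (fun X : (cofreeP p).pos => (iter p m).dir (X.1 m)) h) w) := by
  subst h; rfl

theorem consAt_congr (F : (cofreeP p).pos) (n0 n1 : ℕ) (i : p.dir ((F.1 (n0+1)).2.1))
    {z : (cofreeP p).dir (branchAt F n1 (cast (congrArg p.dir (aEq2 F n0 n1)) i))}
    {z' : (cofreeP p).dir (branchAt F n0 i)} (hz : HEq z z') :
    consAt F n1 (cast (congrArg p.dir (aEq2 F n0 n1)) i) z = consAt F n0 i z' := by
  have hB := branchAt_eq F n0 n1 i
  have hxx : cast (congrArg (fun B => (cofreeP p).dir B) hB.symm) z' = z :=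
    cast_eq_iff_heq.mpr hz.symm
  rw [← hxx]
  clear hxx hz
  induction z' using Quot.ind with
  | _ y =>
    obtain ⟨m, w⟩ := y
    rw [show (Quot.mk _ ⟨m, w⟩ : (cofreeP p).dir (branchAt F n0 i))
        = (lvl p m).onDir (branchAt F n0 i) w from rfl]
    rw [quot_cast hB.symm]
    show (lvl p (m+1)).onDir F
        (Sum.inr ⟨cast (congrArg p.dir (aEq2 F n1 m)) (cast (congrArg p.dir (aEq2 F n0 n1)) i),
          cast (congrArg (fun X : (cofreeP p).pos => (iter p m).dir (X.1 m)) hB.symm) w⟩)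
      = (lvl p (m+1)).onDir F (Sum.inr ⟨cast (congrArg p.dir (aEq2 F n0 m)) i, w⟩)
    refine congrArg _ (congrArg Sum.inr (sigma_mk_eq ?_ ?_))
    · rw [cast_cast]
    · exact cast_heq _ _

theorem graftInv : ∀ (n : ℕ) (F : (cofreeP p).pos) (d : (iter p n).dir (F.1 n)),
    HEq (graftn (n+1) F (liftD F n d)) (graftn n F d)
  | 0, _, _ => HEq.rfl
  | n+1, F, Sum.inl u => by erw [liftD_inl]; exact HEq.rfl
  | n+1, F, Sum.inr ⟨i, j⟩ => by
      rw [liftD_inr]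
      have hB := branchAt_eq F n (n+1) i
      have h1 : HEq
          (graftn (n+1) (branchAt F (n+1) (cast (congrArg p.dir (aEq2 F n (n+1))) i))
            (liftD (branchAt F n i) n j))
          (graftn n (branchAt F n i) j) :=
        (graftn_congr (n+1) hB HEq.rfl).trans (graftInv n (branchAt F n i) j)
      refine Function.hfunext
        (congrArg (cofreeP p).dir
          ((subn_congr (n+1) hB HEq.rfl).trans (subInv n (branchAt F n i) j))) ?_
      intro e e' he
      refine heq_of_eq (consAt_congr F n (n+1) i ?_)
      exact heq_app
        (congrArg (cofreeP p).dir
          ((subn_congr (n+1) hB HEq.rfl).trans (subInv n (branchAt F n i) j)))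
        (congrArg (cofreeP p).dir hB) h1 he

/-- Subtree at a quotient direction. -/
def subQ (F : (cofreeP p).pos) : (cofreeP p).dir F → (cofreeP p).pos :=
  Quot.lift (fun x => subn x.1 F x.2)
    (by rintro ⟨n, d⟩ b h; subst h; exact (subInv n F d).symm)

/-- Grafting at a quotient direction. -/
def grQ (F : (cofreeP p).pos) (e : (cofreeP p).dir F) :
    (cofreeP p).dir (subQ F e) → (cofreeP p).dir F :=
  Quot.hrecOn (motive := fun e => (cofreeP p).dir (subQ F e) → (cofreeP p).dir F)
    e (fun x => graftn x.1 F x.2)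
    (by rintro ⟨n, d⟩ b h; subst h; exact (graftInv n F d).symm)

/-- The splitting `c⁀p → p⁽ᵐ⁾ ◁ c⁀p`. -/
def splitM (p : PolyF) (m : ℕ) : PolyFHom (cofreeP p) (polyComp (iter p m) (cofreeP p)) :=
  ⟨fun F => ⟨F.1 m, fun d => subn m F d⟩, fun F dd => graftn m F dd.1 dd.2⟩

/-- The comultiplication of the cofree comonoid. -/
def comulQ (p : PolyF) : PolyFHom (cofreeP p) (polyComp (cofreeP p) (cofreeP p)) :=
  ⟨fun F => ⟨F, subQ F⟩, fun F dd => grQ F dd.1 dd.2⟩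

theorem comul_lvl (m : ℕ) :
    (comulQ p).comp (hcomp (lvl p m) (PolyFHom.id (cofreeP p))) = splitM p m := rfl


/-- The "empty path" direction at each level. -/
def nilD : ∀ (n : ℕ) (x : (iter p n).pos), (iter p n).dir x
  | 0, _ => PUnit.unit
  | _+1, _ => Sum.inl PUnit.unit

theorem mk_nil (F : (cofreeP p).pos) : ∀ n : ℕ,
    ((lvl p n).onDir F (nilD n (F.1 n)) : (cofreeP p).dir F) = (lvl p 0).onDir F PUnit.unit
  | 0 => rfl
  | n+1 => by
      rw [← mk_nil F n, mk_lift' F n]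
      apply congrArg
      cases n with
      | zero => rfl
      | succ k => exact (liftD_inl F k PUnit.unit).symm

theorem graft_nil : ∀ (n : ℕ) (F : (cofreeP p).pos) (d : (iter p n).dir (F.1 n)),
    graftn n F d ((lvl p 0).onDir (subn n F d) PUnit.unit) = (lvl p n).onDir F d
  | 0, F, d => by cases d; rfl
  | n+1, F, Sum.inl u => by cases u; exact (mk_nil F (n+1)).symm
  | n+1, F, Sum.inr ⟨i, j⟩ => by
      show consAt F n i (graftn n (branchAt F n i) j
          ((lvl p 0).onDir (subn n (branchAt F n i) j) PUnit.unit))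
        = (lvl p (n+1)).onDir F (Sum.inr ⟨i, j⟩)
      rw [graft_nil n (branchAt F n i) j]
      rfl

theorem sub_cons (F : (cofreeP p).pos) (n0 : ℕ) (i : p.dir ((F.1 (n0+1)).2.1))
    (x : (cofreeP p).dir (branchAt F n0 i)) :
    subQ F (consAt F n0 i x) = subQ (branchAt F n0 i) x := by
  induction x using Quot.ind with
  | _ y =>
    obtain ⟨m, w⟩ := y
    exact subn_congr m (branchAt_eq F n0 m i) HEq.rfl

theorem sub_graft : ∀ (n : ℕ) (F : (cofreeP p).pos) (d : (iter p n).dir (F.1 n))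
    (e : (cofreeP p).dir (subn n F d)),
    subQ F (graftn n F d e) = subQ (subn n F d) e
  | 0, _, _, _ => rfl
  | _+1, _, Sum.inl _, _ => rfl
  | n+1, F, Sum.inr ⟨i, j⟩, e => by
      show subQ F (consAt F n i (graftn n (branchAt F n i) j e)) = _
      rw [sub_cons F n i]
      exact sub_graft n (branchAt F n i) j e

theorem gr_cons (F : (cofreeP p).pos) (n0 : ℕ) (i : p.dir ((F.1 (n0+1)).2.1))
    (x : (cofreeP p).dir (branchAt F n0 i))
    {w : (cofreeP p).dir (subQ F (consAt F n0 i x))}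
    {w' : (cofreeP p).dir (subQ (branchAt F n0 i) x)} (hw : HEq w w') :
    grQ F (consAt F n0 i x) w = consAt F n0 i (grQ (branchAt F n0 i) x w') := by
  induction x using Quot.ind with
  | _ y =>
    obtain ⟨m, z⟩ := y
    refine consAt_congr F n0 m i ?_
    exact heq_app
      (congrArg (cofreeP p).dir (subn_congr m (branchAt_eq F n0 m i) HEq.rfl))
      (congrArg (cofreeP p).dir (branchAt_eq F n0 m i))
      (graftn_congr m (branchAt_eq F n0 m i) HEq.rfl) hw

theorem graft_assoc : ∀ (n : ℕ) (F : (cofreeP p).pos) (d : (iter p n).dir (F.1 n))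
    (e : (cofreeP p).dir (subn n F d))
    {w : (cofreeP p).dir (subQ (subn n F d) e)}
    {w' : (cofreeP p).dir (subQ F (graftn n F d e))}, HEq w w' →
    graftn n F d (grQ (subn n F d) e w) = grQ F (graftn n F d e) w'
  | 0, F, d, e => fun hw => by cases hw; rfl
  | _+1, F, Sum.inl u, e => fun hw => by cases hw; rfl
  | n+1, F, Sum.inr ⟨i, j⟩, e => fun hw => by
      rename_i w w'
      have hcast : HEq w' (cast (congrArg (cofreeP p).dir
          (sub_cons F n i (graftn n (branchAt F n i) j e))) w') := (cast_heq _ _).symm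
      exact (congrArg (consAt F n i)
          (graft_assoc n (branchAt F n i) j e (hw.trans hcast))).trans
        (gr_cons F n i (graftn n (branchAt F n i) j e) hcast).symm

theorem sig_app' {I X : Type} {Bf : I → Type} {A A' : I} {T : Bf A → X} {T' : Bf A' → X}
    (h : (⟨A, T⟩ : Σ a : I, Bf a → X) = ⟨A', T'⟩)
    (i : Bf A) (i' : Bf A') (hi : HEq i i') : T i = T' i' := by
  have h1 : A = A' := congrArg Sigma.fst h
  subst h1
  have h2 : T = T' := by injection h
  subst h2; cases hi; rfl

theorem sigma_heq {A : Type} {B B' : A → Type} (hB : ∀ a, B a = B' a)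
    {x : Σ a, B a} {y : Σ a, B' a} (h : HEq x y) : x.1 = y.1 ∧ HEq x.2 y.2 := by
  have hBB : B = B' := funext hB
  subst hBB
  cases h
  exact ⟨rfl, HEq.rfl⟩

theorem lvl_monic {X : PolyF} {F G : PolyFHom X (cofreeP p)}
    (h : ∀ n, F.comp (lvl p n) = G.comp (lvl p n)) : F = G := by
  obtain ⟨FP, FD⟩ := F; obtain ⟨GP, GD⟩ := G
  have hP : FP = GP := by
    funext x; apply Subtype.ext; funext n
    exact congrFun (congrArg PolyFHom.onPos (h n)) x
  subst hP
  simp only [PolyFHom.mk.injEq, heq_eq_eq, true_and]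
  funext x e
  induction e using Quot.ind with
  | _ y =>
    obtain ⟨n, d⟩ := y
    exact hom_dir (h n) x HEq.rfl

theorem lvlL_monic {X B : PolyF} {F G : PolyFHom X (polyComp (cofreeP p) B)}
    (h : ∀ n, F.comp (hcomp (lvl p n) (PolyFHom.id B))
      = G.comp (hcomp (lvl p n) (PolyFHom.id B))) : F = G := by
  obtain ⟨FP, FD⟩ := F; obtain ⟨GP, GD⟩ := G
  have hP : FP = GP := by
    funext x
    have h1 : (FP x).1 = (GP x).1 := by
      apply Subtype.ext; funext n
      exact congrArg Sigma.fst (congrFun (congrArg PolyFHom.onPos (h n)) x)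
    show (⟨(FP x).1, (FP x).2⟩ : Σ A : (cofreeP p).pos, (cofreeP p).dir A → B.pos)
      = ⟨(GP x).1, (GP x).2⟩
    refine sigma_mk_eq h1 ?_
    refine Function.hfunext (congrArg (cofreeP p).dir h1) ?_
    intro e e' he
    refine heq_of_eq ?_
    have he' : cast (congrArg (cofreeP p).dir h1) e = e' := cast_eq_iff_heq.mpr he
    subst he'
    induction e using Quot.ind with
    | _ y =>
      obtain ⟨n, d⟩ := y
      rw [show (Quot.mk _ ⟨n, d⟩ : (cofreeP p).dir (FP x).1)
          = (lvl p n).onDir (FP x).1 d from rfl, quot_cast h1]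
      exact sig_app' (congrFun (congrArg PolyFHom.onPos (h n)) x) d _ (cast_heq _ _).symm
  subst hP
  simp only [PolyFHom.mk.injEq, heq_eq_eq, true_and]
  funext x dd
  obtain ⟨e, w⟩ := dd
  induction e using Quot.ind with
  | _ y =>
    obtain ⟨n, d⟩ := y
    exact hom_dir (h n) x (d := ⟨d, w⟩) (d' := ⟨d, w⟩) HEq.rfl


theorem coassoc_lvl (n : ℕ) :
    ((comulQ p).comp (hcomp (PolyFHom.id (cofreeP p)) (comulQ p))).comp
        (hcomp (lvl p n) (PolyFHom.id (polyComp (cofreeP p) (cofreeP p))))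
      = ((comulQ p).comp ((hcomp (comulQ p) (PolyFHom.id (cofreeP p))).comp
          (assocHom (cofreeP p) (cofreeP p) (cofreeP p)))).comp
        (hcomp (lvl p n) (PolyFHom.id (polyComp (cofreeP p) (cofreeP p)))) := by
  apply PolyFHom.hext
  · intro F
    show (⟨F.1 n, fun d => (⟨subn n F d, subQ (subn n F d)⟩ :
          Σ A : (cofreeP p).pos, (cofreeP p).dir A → (cofreeP p).pos)⟩ :
        Σ a : (iter p n).pos, (iter p n).dir a →
          Σ A : (cofreeP p).pos, (cofreeP p).dir A → (cofreeP p).pos)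
      = ⟨F.1 n, fun d => ⟨subn n F d, fun e => subQ F (graftn n F d e)⟩⟩
    exact congrArg (Sigma.mk (F.1 n)) (funext fun d => congrArg (Sigma.mk (subn n F d))
      (funext fun e => (sub_graft n F d e).symm))
  · intro F dd dd' hdd
    obtain ⟨d, ew⟩ := dd
    obtain ⟨d', ew'⟩ := dd'
    obtain ⟨hd, hew⟩ := sigma_heq
      (B := fun d => (polyComp (cofreeP p) (cofreeP p)).dir
        ⟨subn n F d, fun e => subQ (subn n F d) e⟩)
      (B' := fun d => (polyComp (cofreeP p) (cofreeP p)).dir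
        ⟨subn n F d, fun e => subQ F (graftn n F d e)⟩)
      (fun d => congrArg
        (fun t : (cofreeP p).dir (subn n F d) → (cofreeP p).pos =>
          (polyComp (cofreeP p) (cofreeP p)).dir ⟨subn n F d, t⟩)
        (funext fun e => (sub_graft n F d e).symm)) hdd
    have hd' : d = d' := hd
    subst hd'
    obtain ⟨e, w⟩ := ew
    obtain ⟨e', w'⟩ := ew'
    obtain ⟨he, hw⟩ := sigma_heq
      (B := fun e => (cofreeP p).dir (subQ (subn n F d) e))
      (B' := fun e => (cofreeP p).dir (subQ F (graftn n F d e)))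
      (fun e => congrArg (cofreeP p).dir (sub_graft n F d e).symm) hew
    have he' : e = e' := he
    subst he'
    exact graft_assoc n F d e hw

/-- The comonoid structure on the cofree polynomial. -/
def cofreeComon (p : PolyF) : ComonoidStruct (cofreeP p) where
  counit := projZero p
  comul := comulQ p
  counit_left := rfl
  counit_right := by
    apply PolyFHom.hext
    · intro F; rfl
    · intro F d d' hd
      have hdd : d = d' := eq_of_heq hd
      subst hdd
      show grQ F d ((projZero p).onDir (subQ F d) PUnit.unit) = d
      induction d using Quot.ind with
      | _ y =>
        obtain ⟨n, d0⟩ := y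
        exact graft_nil n F d0
  coassoc := lvlL_monic fun n => coassoc_lvl n


/-! ### The universal property -/

theorem comp_id' {q r : PolyF} (f : PolyFHom q r) : f.comp (PolyFHom.id r) = f := rfl
theorem id_comp' {q r : PolyF} (f : PolyFHom q r) : (PolyFHom.id q).comp f = f := rfl
theorem hcomp_comp {p1 p2 p3 q1 q2 q3 : PolyF}
    (a : PolyFHom p1 p2) (a' : PolyFHom p2 p3) (b : PolyFHom q1 q2) (b' : PolyFHom q2 q3) :
    (hcomp a b).comp (hcomp a' b') = hcomp (a.comp a') (b.comp b') := rfl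

/-- Pairing into a binary product of polynomials. -/
def prodPair {X A B : PolyF} (u : PolyFHom X A) (v : PolyFHom X B) : PolyFHom X (pprod A B) :=
  ⟨fun x => (u.onPos x, v.onPos x), fun x d => Sum.elim (u.onDir x) (v.onDir x) d⟩

theorem prodPair_comp {X A B A' B' : PolyF} (u : PolyFHom X A) (v : PolyFHom X B)
    (s : PolyFHom A A') (t : PolyFHom B B') :
    (prodPair u v).comp (prodMap s t) = prodPair (u.comp s) (v.comp t) := by
  apply PolyFHom.hext
  · intro a; rfl
  · intro a d d' hd
    cases hd
    cases d with
    | inl x => rfl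
    | inr x => rfl

variable {c : PolyF}

/-- The approximations `c → p⁽ⁿ⁾` of the canonical comonoid map into the cofree comonoid. -/
def gIter (mc : ComonoidStruct c) (f : PolyFHom c p) : ∀ n : ℕ, PolyFHom c (iter p n)
  | 0 => mc.counit
  | n+1 => prodPair mc.counit (mc.comul.comp (hcomp f (gIter mc f n)))

theorem gIter_succ (mc : ComonoidStruct c) (f : PolyFHom c p) :
    ∀ n : ℕ, (gIter mc f (n+1)).comp (projIter p n) = gIter mc f n
  | 0 => by
      apply PolyFHom.hext
      · intro a; rfl
      · intro a d d' hd
        cases d'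
        rfl
  | n+1 => by
      show (prodPair mc.counit (mc.comul.comp (hcomp f (gIter mc f (n+1))))).comp
          (prodMap (PolyFHom.id yPoly) (hcomp (PolyFHom.id p) (projIter p n)))
        = prodPair mc.counit (mc.comul.comp (hcomp f (gIter mc f n)))
      rw [prodPair_comp]
      have h2 : (mc.comul.comp (hcomp f (gIter mc f (n+1)))).comp
          (hcomp (PolyFHom.id p) (projIter p n)) = mc.comul.comp (hcomp f (gIter mc f n)) := by
        show mc.comul.comp ((hcomp f (gIter mc f (n+1))).comp
          (hcomp (PolyFHom.id p) (projIter p n))) = _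
        rw [hcomp_comp, comp_id', gIter_succ mc f n]
      rw [h2, comp_id']

/-- The canonical comonoid morphism `c → c⁀p`. -/
def gHom (mc : ComonoidStruct c) (f : PolyFHom c p) : PolyFHom c (cofreeP p) where
  onPos a := ⟨fun n => (gIter mc f n).onPos a,
    fun n => congrFun (congrArg PolyFHom.onPos (gIter_succ mc f n)) a⟩
  onDir a := Quot.lift (fun x => (gIter mc f x.1).onDir a x.2) (by
    rintro ⟨n, d⟩ b h; subst h
    exact (hom_dir (gIter_succ mc f n) a (cast_heq _ _)).symm)

theorem gHom_lvl (mc : ComonoidStruct c) (f : PolyFHom c p) (n : ℕ) :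
    (gHom mc f).comp (lvl p n) = gIter mc f n := rfl

/-- The codomain-of-comultiplication position. -/
def cb (mc : ComonoidStruct c) (a : c.pos) : c.pos := (mc.comul.onPos a).1

/-- The subtree function of the comultiplication. -/
def ct (mc : ComonoidStruct c) (a : c.pos) (i : c.dir (cb mc a)) : c.pos :=
  (mc.comul.onPos a).2 i

theorem cb_eq (mc : ComonoidStruct c) (a : c.pos) : cb mc a = a :=
  hom_pos mc.counit_right a

theorem cl_pos (mc : ComonoidStruct c) (a : c.pos) :
    ct mc a (mc.counit.onDir (cb mc a) PUnit.unit) = a :=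
  hom_pos mc.counit_left a

theorem cl_dir (mc : ComonoidStruct c) (a : c.pos)
    {X : c.dir (ct mc a (mc.counit.onDir (cb mc a) PUnit.unit))} {Y : c.dir a}
    (h : HEq X Y) :
    mc.comul.onDir a ⟨mc.counit.onDir (cb mc a) PUnit.unit, X⟩ = Y :=
  hom_dir mc.counit_left a h

theorem co_sig (mc : ComonoidStruct c) (a : c.pos) :
    (⟨cb mc a, fun i => mc.comul.onPos (ct mc a i)⟩ :
        Σ x : c.pos, c.dir x → (polyComp c c).pos)
      = ⟨cb mc (cb mc a), fun i' => ⟨ct mc (cb mc a) i',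
          fun j' => ct mc a (mc.comul.onDir (cb mc a) ⟨i', j'⟩)⟩⟩ :=
  hom_pos mc.coassoc a

theorem co_dir (mc : ComonoidStruct c) (a : c.pos)
    {dd : Σ i : c.dir (cb mc a), (polyComp c c).dir (mc.comul.onPos (ct mc a i))}
    {dd' : Σ i' : c.dir (cb mc (cb mc a)), Σ e' : c.dir (ct mc (cb mc a) i'),
      c.dir (ct mc a (mc.comul.onDir (cb mc a) ⟨i', e'⟩))}
    (h : HEq dd dd') :
    mc.comul.onDir a ⟨dd.1, mc.comul.onDir (ct mc a dd.1) dd.2⟩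
      = mc.comul.onDir a ⟨mc.comul.onDir (cb mc a) ⟨dd'.1, dd'.2.1⟩, dd'.2.2⟩ :=
  hom_dir mc.coassoc a h

theorem ct_step (mc : ComonoidStruct c) (a : c.pos) (dc : c.dir (cb mc a))
    {dc' : c.dir (cb mc (cb mc a))} (hdc : HEq dc dc')
    {X : c.dir (cb mc (ct mc a dc))} {X' : c.dir (ct mc (cb mc a) dc')} (hX : HEq X X') :
    ct mc (ct mc a dc) X = ct mc a (mc.comul.onDir (cb mc a) ⟨dc', X'⟩) :=
  sig_app' (sig_app' (co_sig mc a) dc dc' hdc) X X' hX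


-- Test the key definitional equality: the branch of the canonical tree is the canonical
-- tree of the subtree position.
example (mc : ComonoidStruct c) (f : PolyFHom c p) (m : ℕ) (a : c.pos)
    (i : p.dir (((gIter mc f (m+1)).onPos a).2.1)) :
    branchAt ((gHom mc f).onPos a) m i
      = (gHom mc f).onPos (ct mc a (f.onDir (cb mc a) i)) := rfl


theorem heart_sub (mc : ComonoidStruct c) (f : PolyFHom c p) :
    ∀ (m : ℕ) (a : c.pos) (d : (iter p m).dir ((gIter mc f m).onPos a))
      {d₂ : (iter p m).dir ((gIter mc f m).onPos (cb mc a))}, HEq d d₂ →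
    subn m ((gHom mc f).onPos a) d
      = (gHom mc f).onPos (ct mc a ((gIter mc f m).onDir (cb mc a) d₂))
  | 0, a, d => fun _ => by
      rename_i d₂
      cases d₂
      exact (congrArg (gHom mc f).onPos (cl_pos mc a)).symm
  | m+1, a, Sum.inl u => fun hd => by
      rename_i d₂
      have hGP : (gIter mc f (m+1)).onPos a = (gIter mc f (m+1)).onPos (cb mc a) :=
        congrArg (gIter mc f (m+1)).onPos (cb_eq mc a).symm
      have hc : cast (congrArg (iter p (m+1)).dir hGP) (Sum.inl u) = d₂ :=
        cast_eq_iff_heq.mpr hd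
      erw [cast_inl hGP] at hc
      subst hc
      cases u
      exact (congrArg (gHom mc f).onPos (cl_pos mc a)).symm
  | m+1, a, Sum.inr ⟨i, j⟩ => fun hd => by
      rename_i d₂
      have hGP : (gIter mc f (m+1)).onPos a = (gIter mc f (m+1)).onPos (cb mc a) :=
        congrArg (gIter mc f (m+1)).onPos (cb_eq mc a).symm
      have hsnd : ((gIter mc f (m+1)).onPos a).2.2 i
          = ((gIter mc f (m+1)).onPos (cb mc a)).2.2
            (cast (congrArg (fun z : (iter p (m+1)).pos => p.dir z.2.1) hGP) i) :=
        sig_app (congrArg (fun z : (iter p (m+1)).pos => z.2) hGP) i _ (cast_heq _ _).symm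
      have hc : cast (congrArg (iter p (m+1)).dir hGP) (Sum.inr ⟨i, j⟩) = d₂ :=
        cast_eq_iff_heq.mpr hd
      rw [cast_inr hGP _ i j (congrArg (iter p m).dir hsnd)] at hc
      subst hc
      have hdc : HEq (f.onDir (cb mc a) i) (f.onDir (cb mc (cb mc a))
          (cast (congrArg (fun z : (iter p (m+1)).pos => p.dir z.2.1) hGP) i)) :=
        hcongr2 (fun x (k : p.dir (f.onPos x)) => f.onDir x k)
          (cb_eq mc (cb mc a)).symm (cast_heq _ _).symm
      have hpos : cb mc (ct mc a (f.onDir (cb mc a) i))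
          = ct mc (cb mc a) (f.onDir (cb mc (cb mc a))
              (cast (congrArg (fun z : (iter p (m+1)).pos => p.dir z.2.1) hGP) i)) :=
        congrArg Sigma.fst (sig_app' (co_sig mc a) (f.onDir (cb mc a) i) _ hdc)
      refine Eq.trans (heart_sub mc f m (ct mc a (f.onDir (cb mc a) i)) j
        (d₂ := cast (congrArg (iter p m).dir (congrArg (gIter mc f m).onPos
          (cb_eq mc (ct mc a (f.onDir (cb mc a) i))).symm)) j) (cast_heq _ _).symm) ?_
      refine congrArg (gHom mc f).onPos ?_
      refine ct_step mc a (f.onDir (cb mc a) i) hdc ?_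
      exact hcongr2 (fun x (z : (iter p m).dir ((gIter mc f m).onPos x)) =>
          (gIter mc f m).onDir x z) hpos
        ((cast_heq _ _).trans (cast_heq _ _).symm)


theorem comp_heq {A A' : Type} {X : Sort u} {Y : Sort v} (hA : A = A')
    {f : A → X} {g : A' → X} (h : HEq f g)
    (k : X → Y) : HEq (fun a => k (f a)) (fun a => k (g a)) := by
  subst hA; cases h; rfl

theorem mk_inj {A : Type} {B : A → Type} {a a' : A} {b : B a} {b' : B a'}
    (h : (⟨a, b⟩ : Σ x, B x) = ⟨a', b'⟩) : a = a' ∧ HEq b b' := by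
  have h1 : a = a' := congrArg Sigma.fst h
  subst h1
  refine ⟨rfl, heq_of_eq ?_⟩
  injection h

theorem sigma_mk_heq {A A' : Type} {B : A → Type} {B' : A' → Type} (hA : A = A')
    (hB : HEq B B') {x : A} {x' : A'} (hx : HEq x x') {y : B x} {y' : B' x'} (hy : HEq y y') :
    HEq (⟨x, y⟩ : Σ z, B z) (⟨x', y'⟩ : Σ z, B' z) := by
  subst hA; cases hB; cases hx; cases hy; rfl

theorem gcons (mc : ComonoidStruct c) (f : PolyFHom c p) (m : ℕ) (a : c.pos)
    (i : p.dir (((gIter mc f (m+1)).onPos a).2.1))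
    (x : (cofreeP p).dir ((gHom mc f).onPos (ct mc a (f.onDir (cb mc a) i)))) :
    (gHom mc f).onDir a (consAt ((gHom mc f).onPos a) m i x)
      = mc.comul.onDir a ⟨f.onDir (cb mc a) i,
          (gHom mc f).onDir (ct mc a (f.onDir (cb mc a) i)) x⟩ := by
  induction x using Quot.ind with
  | _ y => rfl

theorem heart_graft (mc : ComonoidStruct c) (f : PolyFHom c p) :
    ∀ (m : ℕ) (a : c.pos) (d : (iter p m).dir ((gIter mc f m).onPos a))
      {d₂ : (iter p m).dir ((gIter mc f m).onPos (cb mc a))}, HEq d d₂ →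
      ∀ {w : (cofreeP p).dir (subn m ((gHom mc f).onPos a) d)}
        {w₂ : (cofreeP p).dir ((gHom mc f).onPos
          (ct mc a ((gIter mc f m).onDir (cb mc a) d₂)))}, HEq w w₂ →
    (gHom mc f).onDir a (graftn m ((gHom mc f).onPos a) d w)
      = mc.comul.onDir a ⟨(gIter mc f m).onDir (cb mc a) d₂,
          (gHom mc f).onDir (ct mc a ((gIter mc f m).onDir (cb mc a) d₂)) w₂⟩
  | 0, a, d => fun _ => by
      rename_i d₂
      cases d₂
      intro w w₂ hw
      exact (cl_dir mc a (hcongr2 (fun x (z : (cofreeP p).dir ((gHom mc f).onPos x)) =>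
        (gHom mc f).onDir x z) (cl_pos mc a) hw.symm)).symm
  | m+1, a, Sum.inl u => fun hd => by
      rename_i d₂
      have hGP : (gIter mc f (m+1)).onPos a = (gIter mc f (m+1)).onPos (cb mc a) :=
        congrArg (gIter mc f (m+1)).onPos (cb_eq mc a).symm
      have hc : cast (congrArg (iter p (m+1)).dir hGP) (Sum.inl u) = d₂ :=
        cast_eq_iff_heq.mpr hd
      erw [cast_inl hGP] at hc
      subst hc
      cases u
      intro w w₂ hw
      exact (cl_dir mc a (hcongr2 (fun x (z : (cofreeP p).dir ((gHom mc f).onPos x)) =>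
        (gHom mc f).onDir x z) (cl_pos mc a) hw.symm)).symm
  | m+1, a, Sum.inr ⟨i, j⟩ => fun hd => by
      rename_i d₂
      have hGP : (gIter mc f (m+1)).onPos a = (gIter mc f (m+1)).onPos (cb mc a) :=
        congrArg (gIter mc f (m+1)).onPos (cb_eq mc a).symm
      have hsnd : ((gIter mc f (m+1)).onPos a).2.2 i
          = ((gIter mc f (m+1)).onPos (cb mc a)).2.2
            (cast (congrArg (fun z : (iter p (m+1)).pos => p.dir z.2.1) hGP) i) :=
        sig_app (congrArg (fun z : (iter p (m+1)).pos => z.2) hGP) i _ (cast_heq _ _).symm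
      have hc : cast (congrArg (iter p (m+1)).dir hGP) (Sum.inr ⟨i, j⟩) = d₂ :=
        cast_eq_iff_heq.mpr hd
      rw [cast_inr hGP _ i j (congrArg (iter p m).dir hsnd)] at hc
      subst hc
      intro w w₂ hw
      have hdc : HEq (f.onDir (cb mc a) i) (f.onDir (cb mc (cb mc a))
          (cast (congrArg (fun z : (iter p (m+1)).pos => p.dir z.2.1) hGP) i)) :=
        hcongr2 (fun x (k : p.dir (f.onPos x)) => f.onDir x k)
          (cb_eq mc (cb mc a)).symm (cast_heq _ _).symm
      have hsplitC := sig_app' (co_sig mc a) (f.onDir (cb mc a) i) _ hdc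
      have hpos : cb mc (ct mc a (f.onDir (cb mc a) i))
          = ct mc (cb mc a) (f.onDir (cb mc (cb mc a))
              (cast (congrArg (fun z : (iter p (m+1)).pos => p.dir z.2.1) hGP) i)) :=
        congrArg Sigma.fst hsplitC
      have hT := heart_sub mc f m (ct mc a (f.onDir (cb mc a) i)) j
        (d₂ := cast (congrArg (iter p m).dir (congrArg (gIter mc f m).onPos
          (cb_eq mc (ct mc a (f.onDir (cb mc a) i))).symm)) j) (cast_heq _ _).symm
      have hIH := heart_graft mc f m (ct mc a (f.onDir (cb mc a) i)) j
        (d₂ := cast (congrArg (iter p m).dir (congrArg (gIter mc f m).onPos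
          (cb_eq mc (ct mc a (f.onDir (cb mc a) i))).symm)) j) (cast_heq _ _).symm
        (w := w) (w₂ := cast (congrArg (cofreeP p).dir hT) w) (cast_heq _ _).symm
      refine Eq.trans (gcons mc f m a i
        (graftn m ((gHom mc f).onPos (ct mc a (f.onDir (cb mc a) i))) j w)) ?_
      rw [hIH]
      have hj32 : HEq (cast (congrArg (iter p m).dir (congrArg (gIter mc f m).onPos
          (cb_eq mc (ct mc a (f.onDir (cb mc a) i))).symm)) j)
          (cast (congrArg (iter p m).dir hsnd) j) :=
        (cast_heq _ _).trans (cast_heq _ _).symm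
      have hB1 := hcongr2 (fun x (z : (iter p m).dir ((gIter mc f m).onPos x)) =>
        (gIter mc f m).onDir x z) hpos hj32
      have hBout : HEq
          (fun i0 : c.dir (cb mc a) => (polyComp c c).dir (mc.comul.onPos (ct mc a i0)))
          (fun i' : c.dir (cb mc (cb mc a)) => (polyComp c c).dir
            (⟨ct mc (cb mc a) i', fun e' => ct mc a (mc.comul.onDir (cb mc a) ⟨i', e'⟩)⟩ :
              (polyComp c c).pos)) :=
        comp_heq (congrArg c.dir (congrArg Sigma.fst (co_sig mc a)))
          (mk_inj (co_sig mc a)).2 (polyComp c c).dir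
      have hBin : HEq
          (fun e : c.dir (cb mc (ct mc a (f.onDir (cb mc a) i))) =>
            c.dir (ct mc (ct mc a (f.onDir (cb mc a) i)) e))
          (fun e' : c.dir (ct mc (cb mc a) (f.onDir (cb mc (cb mc a))
              (cast (congrArg (fun z : (iter p (m+1)).pos => p.dir z.2.1) hGP) i))) =>
            c.dir (ct mc a (mc.comul.onDir (cb mc a) ⟨f.onDir (cb mc (cb mc a))
              (cast (congrArg (fun z : (iter p (m+1)).pos => p.dir z.2.1) hGP) i), e'⟩))) :=
        comp_heq (congrArg c.dir hpos) (mk_inj hsplitC).2 c.dir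
      exact co_dir mc a (sigma_mk_heq (congrArg c.dir (congrArg Sigma.fst (co_sig mc a)))
        hBout
        hdc
        (sigma_mk_heq (congrArg c.dir hpos)
          hBin
          hB1
          (hcongr2 (fun x (z : (cofreeP p).dir ((gHom mc f).onPos x)) =>
              (gHom mc f).onDir x z)
            (ct_step mc a (f.onDir (cb mc a) i) hdc hB1)
            ((cast_heq _ _).trans hw))))


theorem sigma_heq' {A A' : Type} {B : A → Type} {B' : A' → Type} (hA : A = A') (hB : HEq B B')
    {x : Σ a, B a} {y : Σ a, B' a} (h : HEq x y) : HEq x.1 y.1 ∧ HEq x.2 y.2 := by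
  subst hA; cases hB; cases h; exact ⟨HEq.rfl, HEq.rfl⟩

theorem ghom_split (mc : ComonoidStruct c) (f : PolyFHom c p) (n : ℕ) :
    (gHom mc f).comp (splitM p n) = mc.comul.comp (hcomp (gIter mc f n) (gHom mc f)) := by
  have hPos : ∀ a : c.pos, (⟨(gIter mc f n).onPos a, fun d => subn n ((gHom mc f).onPos a) d⟩ :
        Σ x : (iter p n).pos, (iter p n).dir x → (cofreeP p).pos)
      = ⟨(gIter mc f n).onPos (cb mc a), fun d₂ => (gHom mc f).onPos
          (ct mc a ((gIter mc f n).onDir (cb mc a) d₂))⟩ := by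
    intro a
    refine sigma_mk_eq (congrArg (gIter mc f n).onPos (cb_eq mc a).symm) ?_
    refine Function.hfunext
      (congrArg (iter p n).dir (congrArg (gIter mc f n).onPos (cb_eq mc a).symm)) ?_
    intro d d₂ hd
    exact heq_of_eq (heart_sub mc f n a d hd)
  apply PolyFHom.hext
  · intro a; exact hPos a
  · intro a dd dd' hdd
    obtain ⟨d, w⟩ := dd
    obtain ⟨d₂, w₂⟩ := dd'
    obtain ⟨hd, hw⟩ := sigma_heq'
      (congrArg (iter p n).dir (congrArg (gIter mc f n).onPos (cb_eq mc a).symm))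
      (comp_heq (congrArg (iter p n).dir (congrArg (gIter mc f n).onPos (cb_eq mc a).symm))
        (mk_inj (hPos a)).2 (cofreeP p).dir) hdd
    exact heart_graft mc f n a d hd hw

theorem ghom_comul (mc : ComonoidStruct c) (f : PolyFHom c p) :
    (gHom mc f).comp (comulQ p) = mc.comul.comp (hcomp (gHom mc f) (gHom mc f)) := by
  apply lvlL_monic
  intro n
  show (gHom mc f).comp ((comulQ p).comp (hcomp (lvl p n) (PolyFHom.id (cofreeP p))))
    = mc.comul.comp ((hcomp (gHom mc f) (gHom mc f)).comp
        (hcomp (lvl p n) (PolyFHom.id (cofreeP p))))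
  rw [comul_lvl, hcomp_comp, comp_id']
  exact ghom_split mc f n

theorem ghom_counit (mc : ComonoidStruct c) (f : PolyFHom c p) :
    (gHom mc f).comp (projZero p) = mc.counit := by
  apply PolyFHom.hext
  · intro a; rfl
  · intro a d d' hd
    cases d'
    rfl

theorem cr_dir (mc : ComonoidStruct c) (a : c.pos) {X : c.dir (cb mc a)} {Y : c.dir a}
    (h : HEq X Y) :
    mc.comul.onDir a ⟨X, mc.counit.onDir (ct mc a X) PUnit.unit⟩ = Y :=
  hom_dir mc.counit_right a h

theorem ghom_projP (mc : ComonoidStruct c) (f : PolyFHom c p) :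
    (gHom mc f).comp (projP p) = f := by
  apply PolyFHom.hext
  · intro a; exact congrArg f.onPos (cb_eq mc a)
  · intro a d d' hd
    exact cr_dir mc a (hcongr2 (fun x (k : p.dir (f.onPos x)) => f.onDir x k)
      (cb_eq mc a) hd)

theorem sigma_shift {I X : Type} {Bf : I → Type} {A A' : I} (h : A' = A) (T : Bf A → X) :
    (⟨A, T⟩ : Σ i, Bf i → X) = ⟨A', fun i => T (cast (congrArg Bf h) i)⟩ := by
  subst h; rfl

theorem comp_prodPair {X Y A B : PolyF} (w : PolyFHom X Y) (u : PolyFHom Y A)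
    (v : PolyFHom Y B) :
    w.comp (prodPair u v) = prodPair (w.comp u) (w.comp v) := by
  apply PolyFHom.hext
  · intro a; rfl
  · intro a d d' hd
    cases hd
    cases d with
    | inl x => rfl
    | inr x => rfl

theorem lvl0 : lvl p 0 = projZero p := by
  apply PolyFHom.hext
  · intro F; rfl
  · intro F d d' hd
    cases d
    rfl

/-- Destructure map of the cofree comonoid. -/
def destQ (p : PolyF) : PolyFHom (cofreeP p) (polyComp p (cofreeP p)) :=
  (comulQ p).comp (hcomp (projP p) (PolyFHom.id (cofreeP p)))

theorem lvl_peel (n : ℕ) : lvl p (n+1)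
    = prodPair (projZero p) ((destQ p).comp (hcomp (PolyFHom.id p) (lvl p n))) := by
  have hOP : ∀ F : (cofreeP p).pos, (F.1 (n+1) : (iter p (n+1)).pos)
      = (PUnit.unit, ⟨(F.1 1).2.1,
          fun i => (F.1 (n+1)).2.2 (cast (congrArg p.dir (aEq2 F 0 n)) i)⟩) := by
    intro F
    exact congrArg (Prod.mk PUnit.unit) (sigma_shift (aEq F n).symm ((F.1 (n+1)).2.2))
  apply PolyFHom.hext
  · intro F; exact hOP F
  · intro F d d' hd
    have hc : cast (congrArg (iter p (n+1)).dir (hOP F).symm) d' = d :=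
      cast_eq_iff_heq.mpr hd.symm
    cases d' with
    | inl u =>
      erw [cast_inl (hOP F).symm] at hc
      subst hc
      cases u
      exact mk_nil F (n+1)
    | inr ij =>
      obtain ⟨i, j⟩ := ij
      erw [cast_inr (hOP F).symm _ i j
        (congrArg (iter p n).dir (sig_app (congrArg
          (fun z : (iter p (n+1)).pos => z.2) (hOP F).symm) i _ (cast_heq _ _).symm))] at hc
      subst hc
      rfl

theorem uniq_lvl (mc : ComonoidStruct c) (f : PolyFHom c p) (h : PolyFHom c (cofreeP p))
    (h1 : h.comp (projZero p) = mc.counit)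
    (h2 : h.comp (comulQ p) = mc.comul.comp (hcomp h h))
    (h3 : h.comp (projP p) = f) : ∀ n : ℕ, h.comp (lvl p n) = gIter mc f n
  | 0 => by rw [lvl0]; exact h1
  | n+1 => by
      erw [lvl_peel, comp_prodPair, h1]
      refine congrArg (prodPair mc.counit) ?_
      show ((h.comp (comulQ p)).comp (hcomp (projP p) (PolyFHom.id (cofreeP p)))).comp
          (hcomp (PolyFHom.id p) (lvl p n)) = mc.comul.comp (hcomp f (gIter mc f n))
      rw [h2]
      show mc.comul.comp (((hcomp h h).comp (hcomp (projP p) (PolyFHom.id (cofreeP p)))).comp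
          (hcomp (PolyFHom.id p) (lvl p n))) = _
      rw [hcomp_comp, h3, comp_id', hcomp_comp, comp_id', uniq_lvl mc f h h1 h2 h3 n]

end CofreeInfra
/-- The cofree comonoid `c⁀p` is right adjoint to the forgetful functor
from comonoids to `Poly`: it carries a comonoid structure whose counit-of-adjunction is
the projection `c⁀p → p` (through `p⁽¹⁾ = y × p`), couniversal in the sense that every
polynomial map from (the carrier of) a comonoid `c` to `p` factors uniquely through a
comonoid homomorphism `c → c⁀p`. -/
theorem cofree_right_adjoint (p : PolyF) :
    ∃ M : ComonoidStruct (cofreeP p),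
      M.counit = projZero p ∧
      ∀ (c : PolyF) (mc : ComonoidStruct c) (f : PolyFHom c p),
        ∃! g : PolyFHom c (cofreeP p), IsComonHom mc M g ∧ g.comp (projP p) = f := by
  refine ⟨cofreeComon p, rfl, ?_⟩
  intro c mc f
  refine ⟨gHom mc f, ⟨⟨ghom_counit mc f, ghom_comul mc f⟩, ghom_projP mc f⟩, ?_⟩
  rintro g' ⟨⟨hc1, hc2⟩, hpr⟩
  apply lvl_monic
  intro n
  rw [gHom_lvl]
  exact uniq_lvl mc f g' hc1 hc2 hpr n
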